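/- arXiv:1903.05883 — 4 statements merged into one kernel-verified Lean document; each statement's English description precedes it below -/
import Mathlib

section
/- Let M be a compact metric space, φ a continuous flow on M, and f : M → M a homeomorphism commuting with φ. Assume there exists T > 0 such that for every p ∈ M there is t ∈ [-T, T] with f(p) = φ_t(p). Then there is a unique function τ₁ : M ∖ Crit(φ) → ℝ such that f(x) = φ_{τ₁(x)}(x) for every x ∈ M ∖ Crit(φ); moreover τ₁ takes values in [-T, T], is continuous on M ∖ Crit(φ) (with the subspace topology), and is φ-invariant, i.e. τ₁(φ_s(x)) = τ₁(x) for all s ∈ ℝ and x ∈ M ∖ Crit(φ). -/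
open Set Filter Topology

/-- Given a compact metric space `M`, a continuous flow `φ` on `M`, and a
homeomorphism `f` commuting with `φ` such that every point is displaced along its orbit by a
time in `[-T, T]`, there is a unique function `τ₁` on the complement of the critical set
(fixed and periodic points) with `f x = φ (τ₁ x) x`; moreover `τ₁` takes values in `[-T, T]`,
is continuous and is `φ`-invariant. -/
theorem stmt_0
    {M : Type*} [MetricSpace M] [CompactSpace M]
    (φ : ℝ → M → M)
    (hφcont : Continuous fun q : ℝ × M => φ q.1 q.2)
    (hφ0 : ∀ x, φ 0 x = x)
    (hφadd : ∀ s t x, φ (s + t) x = φ s (φ t x))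
    (f : M ≃ₜ M)
    (hcomm : ∀ t x, f (φ t x) = φ t (f x))
    (T : ℝ) (hT : 0 < T)
    (hbound : ∀ p : M, ∃ t ∈ Set.Icc (-T) T, f p = φ t p)
    (Crit : Set M)
    (hCrit : Crit = {p | (∀ t, φ t p = p) ∨
      ((¬ ∀ t, φ t p = p) ∧ ∃ s, s ≠ 0 ∧ φ s p = p)}) :
    ∃ τ₁ : {x : M // x ∉ Crit} → ℝ,
      (∀ x, f x.1 = φ (τ₁ x) x.1) ∧
      (∀ x, τ₁ x ∈ Set.Icc (-T) T) ∧
      Continuous τ₁ ∧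
      (∀ (s : ℝ) (x : {x : M // x ∉ Crit}) (h : φ s x.1 ∉ Crit),
        τ₁ ⟨φ s x.1, h⟩ = τ₁ x) ∧
      (∀ τ' : {x : M // x ∉ Crit} → ℝ,
        (∀ x, f x.1 = φ (τ' x) x.1) → τ' = τ₁) := by
  -- injectivity of the orbit map at non-critical points
  have hinj : ∀ p : M, p ∉ Crit → ∀ t t' : ℝ, φ t p = φ t' p → t = t' := by
    intro p hp t t' h
    by_contra hne
    have hper : φ (t - t') p = p := by
      have := congrArg (φ (-t')) h
      rw [← hφadd, ← hφadd] at this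
      simpa [hφ0, sub_eq_add_neg, add_comm] using this
    rw [hCrit] at hp
    simp only [Set.mem_setOf_eq, not_or, not_and, not_exists] at hp
    by_cases hfix : ∀ s, φ s p = p
    · exact hp.1 hfix
    · exact hp.2 hfix (t - t') (sub_ne_zero.mpr hne) hper
  refine ⟨fun x => (hbound x.1).choose, fun x => (hbound x.1).choose_spec.2, fun x =>
    (hbound x.1).choose_spec.1, ?_, ?_, ?_⟩
  · -- continuity
    have huniq : ∀ (x : {x : M // x ∉ Crit}) (t : ℝ), f x.1 = φ t x.1 →
        t = (hbound x.1).choose := fun x t ht =>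
      hinj x.1 x.2 t _ (ht.symm.trans (hbound x.1).choose_spec.2)
    apply SeqContinuous.continuous
    intro u x hux
    apply tendsto_of_subseq_tendsto
    intro ns hns
    have hmem : ∀ n, (hbound (u (ns n)).1).choose ∈ Set.Icc (-T) T := fun n =>
      (hbound (u (ns n)).1).choose_spec.1
    obtain ⟨L, hL, ms, hms, htend⟩ := (isCompact_Icc (a := -T) (b := T)).tendsto_subseq hmem
    refine ⟨ms, ?_⟩
    have hx : Tendsto (fun n => (u (ns (ms n))).1) atTop (𝓝 x.1) :=
      ((continuous_subtype_val.tendsto x).comp hux).comp (hns.comp hms.tendsto_atTop)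
    have hfL : f x.1 = φ L x.1 := by
      have h1 : Tendsto (fun n => f (u (ns (ms n))).1) atTop (𝓝 (f x.1)) :=
        (f.continuous.tendsto x.1).comp hx
      have h2 : Tendsto (fun n => φ ((hbound (u (ns (ms n))).1).choose) (u (ns (ms n))).1)
          atTop (𝓝 (φ L x.1)) := by
        have := (hφcont.tendsto (L, x.1)).comp (htend.prodMk_nhds hx)
        exact this
      have heq : (fun n => f (u (ns (ms n))).1) =
          fun n => φ ((hbound (u (ns (ms n))).1).choose) (u (ns (ms n))).1 := by
        funext n; exact (hbound (u (ns (ms n))).1).choose_spec.2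
      rw [heq] at h1
      exact tendsto_nhds_unique h1 h2
    have goal : Tendsto (fun n => (hbound (u (ns (ms n))).1).choose) atTop
        (𝓝 ((hbound x.1).choose)) := by
      rw [← huniq x L hfL]; exact htend
    exact goal
  · -- invariance
    intro s x h
    apply hinj (φ s x.1) h
    calc φ ((hbound (φ s x.1)).choose) (φ s x.1)
        = f (φ s x.1) := ((hbound (φ s x.1)).choose_spec.2).symm
      _ = φ s (f x.1) := hcomm s x.1
      _ = φ s (φ ((hbound x.1).choose) x.1) := congrArg (φ s) (hbound x.1).choose_spec.2
      _ = φ ((hbound x.1).choose) (φ s x.1) := by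
          rw [← hφadd, ← hφadd, add_comm]
  · -- uniqueness
    intro τ' hτ'
    funext x
    exact hinj x.1 x.2 _ _ ((hτ' x).symm.trans (hbound x.1).choose_spec.2)
end

section
/- Let M be a compact metric space and φ a continuous flow on M having no fixed points and no periodic points. Let f : M → M be a homeomorphism commuting with φ, and assume there exists T > 0 such that for every p ∈ M there is t ∈ [-T, T] with f(p) = φ_t(p). Then there exists a continuous φ-invariant function τ : M → ℝ (i.e. τ(φ_s(x)) = τ(x) for all s ∈ ℝ, x ∈ M) such that f(p) = φ_{τ(p)}(p) for every p ∈ M. -/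
open Set Filter Topology

/-- Quasi-triviality for flows without fixed or periodic points. -/
theorem stmt_1
    {M : Type*} [MetricSpace M] [CompactSpace M]
    (φ : ℝ → M → M)
    (hφcont : Continuous fun q : ℝ × M => φ q.1 q.2)
    (hφ0 : ∀ x, φ 0 x = x)
    (hφadd : ∀ s t x, φ (s + t) x = φ s (φ t x))
    (hnocrit : ∀ (p : M) (s : ℝ), s ≠ 0 → φ s p ≠ p)
    (f : M ≃ₜ M)
    (hcomm : ∀ t x, f (φ t x) = φ t (f x))
    (T : ℝ) (hT : 0 < T)
    (hbound : ∀ p : M, ∃ t ∈ Set.Icc (-T) T, f p = φ t p) :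
    ∃ τ : M → ℝ, Continuous τ ∧
      (∀ (s : ℝ) (x : M), τ (φ s x) = τ x) ∧
      (∀ p : M, f p = φ (τ p) p) := by
  have hunique : ∀ (p : M) (a b : ℝ), φ a p = φ b p → a = b := by
    intro p a b h
    by_contra hne
    have h1 : φ (a - b) (φ b p) = φ b p := by
      rw [← hφadd, sub_add_cancel, h]
    exact hnocrit (φ b p) (a - b) (sub_ne_zero.mpr hne) h1
  choose τ hτmem hτ using hbound
  refine ⟨τ, ?_, ?_, hτ⟩
  · rw [continuous_iff_continuousAt]
    intro p
    apply tendsto_of_subseq_tendsto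
    intro ns hns
    obtain ⟨t, htmem, ms, hms, hlim⟩ :=
      (isCompact_Icc (a := -T) (b := T)).tendsto_subseq (fun k => hτmem (ns k))
    refine ⟨ms, ?_⟩
    have hp : Tendsto (fun k => ns (ms k)) atTop (𝓝 p) :=
      hns.comp hms.tendsto_atTop
    have h1 : Tendsto (fun k => φ (τ (ns (ms k))) (ns (ms k))) atTop (𝓝 (φ t p)) :=
      (hφcont.tendsto (t, p)).comp (hlim.prodMk_nhds hp)
    have h2 : Tendsto (fun k => f (ns (ms k))) atTop (𝓝 (f p)) :=
      (f.continuous.tendsto p).comp hp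
    have heq : f p = φ t p := by
      refine tendsto_nhds_unique ?_ h1
      simpa only [hτ] using h2
    have ht : t = τ p := hunique p t (τ p) (by rw [← heq, hτ])
    rw [ht] at hlim
    exact hlim
  · intro s x
    apply hunique (φ s x)
    have : φ (τ (φ s x)) (φ s x) = φ (τ x) (φ s x) := by
      rw [← hτ (φ s x)]
      have : φ (τ x) (φ s x) = φ s (φ (τ x) x) := by
        rw [← hφadd, ← hφadd, add_comm]
      rw [this, ← hτ x, hcomm]
    exact this
end

section
/- Let M be a compact metric space, φ a continuous flow on M, f : M → M a homeomorphism commuting with φ, and p a periodic point of φ with minimal period π. Suppose x, y ∈ W^{ss}(p) and a, b ∈ ℝ satisfy f(x) = φ_a(x) and f(y) = φ_b(y). Then a − b is an integer multiple of π. -/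
open Set Filter Topology
open scoped Uniformity

/-- If `f` commutes with the flow, `p` is periodic with minimal period `π`,
and `x, y ∈ W^{ss}(p)` satisfy `f x = φ_a x`, `f y = φ_b y`, then `a - b` is an integer
multiple of `π`. -/
theorem stmt_5
    {M : Type*} [MetricSpace M] [CompactSpace M]
    (φ : ℝ → M → M)
    (hφcont : Continuous fun q : ℝ × M => φ q.1 q.2)
    (hφ0 : ∀ x, φ 0 x = x)
    (hφadd : ∀ s t x, φ (s + t) x = φ s (φ t x))
    (f : M ≃ₜ M)
    (hcomm : ∀ t x, f (φ t x) = φ t (f x))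
    (Wss : M → Set M)
    (hWss : ∀ p, Wss p =
      {x : M | Tendsto (fun t : ℝ => dist (φ t x) (φ t p)) atTop (nhds 0)})
    (p : M) (π : ℝ)
    (hnotfix : ¬ ∀ t, φ t p = p)
    (hπpos : 0 < π) (hper : φ π p = p)
    (hmin : ∀ t, 0 < t → t < π → φ t p ≠ p)
    (x y : M) (hx : x ∈ Wss p) (hy : y ∈ Wss p)
    (a b : ℝ) (hfx : f x = φ a x) (hfy : f y = φ b y) :
    ∃ k : ℤ, a - b = (k : ℝ) * π := by
  have hneg : φ (-π) p = p := by
    have h := hφadd (-π) π p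
    rw [hper] at h
    simpa [hφ0] using h.symm
  have hZ : ∀ n : ℤ, φ ((n : ℝ) * π) p = p := by
    intro n
    induction n using Int.induction_on with
    | zero => simpa using hφ0 p
    | succ n ih =>
      have he : ((n : ℝ) + 1) * π = π + (n : ℝ) * π := by ring
      push_cast
      rw [he, hφadd]
      push_cast at ih
      rw [ih, hper]
    | pred n ih =>
      have he : (-(n : ℝ) - 1) * π = -π + (-(n : ℝ)) * π := by ring
      push_cast
      rw [he, hφadd]
      push_cast at ih
      rw [ih, hneg]
  rw [hWss, mem_setOf_eq] at hx hy
  have hxa : ∀ t, f (φ t x) = φ (t + a) x := fun t => by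
    rw [hcomm, hfx, ← hφadd, add_comm]
  have hyb : ∀ t, f (φ t y) = φ (t + b) y := fun t => by
    rw [hcomm, hfy, ← hφadd, add_comm]
  have dxy : Tendsto (fun t : ℝ => dist (φ t x) (φ t y)) atTop (𝓝 0) := by
    have h := hx.add hy
    rw [add_zero] at h
    exact squeeze_zero (fun t => dist_nonneg) (fun t => dist_triangle_right _ _ _) h
  have hf : UniformContinuous f := CompactSpace.uniformContinuous_of_continuous f.continuous
  have dfxy : Tendsto (fun t : ℝ => dist (φ (t + a) x) (φ (t + b) y)) atTop (𝓝 0) := by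
    have h1 : Tendsto (fun t : ℝ => (φ t x, φ t y)) atTop (𝓤 M) :=
      tendsto_uniformity_iff_dist_tendsto_zero.2 dxy
    have h2 := tendsto_uniformity_iff_dist_tendsto_zero.1 (Filter.Tendsto.comp hf h1)
    simpa only [Function.comp_def, hxa, hyb] using h2
  have ha' : Tendsto (fun t : ℝ => dist (φ (t + a) x) (φ (t + a) p)) atTop (𝓝 0) :=
    hx.comp (tendsto_atTop_add_const_right atTop a tendsto_id)
  have hb' : Tendsto (fun t : ℝ => dist (φ (t + b) y) (φ (t + b) p)) atTop (𝓝 0) :=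
    hy.comp (tendsto_atTop_add_const_right atTop b tendsto_id)
  have dpp : Tendsto (fun t : ℝ => dist (φ (t + a) p) (φ (t + b) p)) atTop (𝓝 0) := by
    have h := (ha'.add dfxy).add hb'
    simp only [add_zero] at h
    refine squeeze_zero (fun t => dist_nonneg) (fun t => ?_) h
    calc dist (φ (t + a) p) (φ (t + b) p)
        ≤ dist (φ (t + a) p) (φ (t + a) x) + dist (φ (t + a) x) (φ (t + b) y)
            + dist (φ (t + b) y) (φ (t + b) p) := dist_triangle4 _ _ _ _
      _ = dist (φ (t + a) x) (φ (t + a) p) + dist (φ (t + a) x) (φ (t + b) y)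
            + dist (φ (t + b) y) (φ (t + b) p) := by rw [dist_comm]
  have hconst : ∀ n : ℕ, dist (φ ((n : ℝ) * π + a) p) (φ ((n : ℝ) * π + b) p)
      = dist (φ a p) (φ b p) := by
    intro n
    have hZn : φ ((n : ℝ) * π) p = p := by
      have := hZ (n : ℤ); push_cast at this; exact this
    rw [add_comm ((n : ℝ) * π) a, add_comm ((n : ℝ) * π) b, hφadd, hφadd, hZn]
  have hnseq : Tendsto (fun n : ℕ => (n : ℝ) * π) atTop atTop :=
    tendsto_natCast_atTop_atTop.atTop_mul_const hπpos
  have subseq := dpp.comp hnseq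
  simp only [Function.comp_def, hconst] at subseq
  have hd0 : dist (φ a p) (φ b p) = 0 :=
    tendsto_nhds_unique tendsto_const_nhds subseq
  have heq : φ a p = φ b p := by rwa [dist_eq_zero] at hd0
  have hdiff : φ (a - b) p = p := by
    have h1 : φ (a - b) p = φ (-b) (φ a p) := by
      rw [← hφadd]; ring_nf
    rw [h1, heq, ← hφadd]
    simpa using hφ0 p
  refine ⟨⌊(a - b) / π⌋, ?_⟩
  set k : ℤ := ⌊(a - b) / π⌋ with hk
  have h0 : 0 ≤ a - b - (k : ℝ) * π := Int.sub_floor_div_mul_nonneg (a - b) hπpos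
  have h1 : a - b - (k : ℝ) * π < π := Int.sub_floor_div_mul_lt (a - b) hπpos
  have hr : φ (a - b - (k : ℝ) * π) p = p := by
    have he : a - b - (k : ℝ) * π = (a - b) + ((-k : ℤ) : ℝ) * π := by push_cast; ring
    rw [he, hφadd, hZ (-k), hdiff]
  rcases eq_or_lt_of_le h0 with h | h
  · linarith
  · exact absurd hr (hmin _ h h1)
end

section
/- Let A = [[3,2,1],[2,2,1],[1,1,1]] and B = [[2,1,1],[1,2,0],[1,0,1]], regarded as elements of GL(3, ℤ) (both have determinant 1, hence are invertible over ℤ). For all integers l, k, if A^l · B^k is the identity matrix, then l = 0 and k = 0. Equivalently, the group homomorphism ℤ² → GL(3, ℤ) sending (l,k) to A^l B^k is injective, so A and B generate a group isomorphic to ℤ². -/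
open Matrix

private theorem eigzpow10 (u : GL (Fin 3) ℝ) (c : ℝ) (hc : c ≠ 0) (v : Fin 3 → ℝ)
    (h : (u : Matrix (Fin 3) (Fin 3) ℝ) *ᵥ v = c • v) (l : ℤ) :
    ((u ^ l : GL (Fin 3) ℝ) : Matrix (Fin 3) (Fin 3) ℝ) *ᵥ v = (c ^ l) • v := by
  have hinv : ((u⁻¹ : GL (Fin 3) ℝ) : Matrix (Fin 3) (Fin 3) ℝ) *ᵥ v = c⁻¹ • v := by
    have h2 := congrArg (fun w => ((u⁻¹ : GL (Fin 3) ℝ) : Matrix (Fin 3) (Fin 3) ℝ) *ᵥ w) h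
    simp only [Matrix.mulVec_smul, Matrix.mulVec_mulVec] at h2
    rw [← Units.val_mul, inv_mul_cancel, Units.val_one, Matrix.one_mulVec] at h2
    funext i
    have := congrFun h2 i
    simp only [Pi.smul_apply, smul_eq_mul] at this ⊢
    rw [this, inv_mul_cancel_left₀ hc]
  induction l using Int.induction_on with
  | zero => simp
  | succ n ih =>
      rw [show ((n:ℤ)+1) = (n+1:ℤ) from rfl, _root_.zpow_add_one, Units.val_mul,
        ← Matrix.mulVec_mulVec, h, Matrix.mulVec_smul, ih, smul_smul, zpow_add_one₀ hc]
      ring_nf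
  | pred n ih =>
      rw [show (-(n:ℤ)-1) = (-(n:ℤ)) + (-1) from by ring, _root_.zpow_add, _root_.zpow_neg_one,
        Units.val_mul, ← Matrix.mulVec_mulVec, hinv, Matrix.mulVec_smul, ih, smul_smul,
        zpow_add₀ hc, _root_.zpow_neg_one]
      ring_nf

private theorem eigA10 (α : ℝ) (hα : α^3 = α^2 + 2*α - 1) :
    (!![3,2,1;2,2,1;1,1,1] : Matrix (Fin 3) (Fin 3) ℝ) *ᵥ ![α^2-1, α, 1]
      = (α^2+α) • ![α^2-1, α, 1] := by
  have h4 : α^4 = 3*α^2 + α - 1 := by linear_combination (α+1)*hα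
  funext i
  fin_cases i
  · simp [Matrix.mulVec, dotProduct, Fin.sum_univ_three]
    linear_combination -h4 - hα
  · simp [Matrix.mulVec, dotProduct, Fin.sum_univ_three]
    linear_combination -hα
  · simp [Matrix.mulVec, dotProduct, Fin.sum_univ_three]
    ring

private theorem eigB10 (α : ℝ) (hα : α^3 = α^2 + 2*α - 1) :
    (!![2,1,1;1,2,0;1,0,1] : Matrix (Fin 3) (Fin 3) ℝ) *ᵥ ![α^2-1, α, 1]
      = (α^2) • ![α^2-1, α, 1] := by
  have h4 : α^4 = 3*α^2 + α - 1 := by linear_combination (α+1)*hα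
  funext i
  fin_cases i
  · simp [Matrix.mulVec, dotProduct, Fin.sum_univ_three]
    linear_combination -h4
  · simp [Matrix.mulVec, dotProduct, Fin.sum_univ_three]
    linear_combination -hα
  · simp [Matrix.mulVec, dotProduct, Fin.sum_univ_three]

/-- From `A^l * B^k = 1` and a root `α` of `x^3 - x^2 - 2x + 1`, we get a linear relation
between `l`, `k` and the logs of the eigenvalues `α^2 + α` (for `A`) and `α^2` (for `B`). -/
private theorem logrel10 (A B : GL (Fin 3) ℤ)
    (hA : (A : Matrix (Fin 3) (Fin 3) ℤ) = !![3, 2, 1; 2, 2, 1; 1, 1, 1])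
    (hB : (B : Matrix (Fin 3) (Fin 3) ℤ) = !![2, 1, 1; 1, 2, 0; 1, 0, 1])
    (l k : ℤ) (h : A ^ l * B ^ k = 1)
    (α : ℝ) (hα : α^3 = α^2 + 2*α - 1) :
    (k:ℝ) * Real.log (α^2) + (l:ℝ) * Real.log (α^2+α) = 0 := by
  have hα0 : α ≠ 0 := by intro h0; rw [h0] at hα; norm_num at hα
  have hα1 : α ≠ -1 := by intro h0; rw [h0] at hα; norm_num at hα
  have hμ0 : (α^2 : ℝ) ≠ 0 := pow_ne_zero _ hα0
  have hlam0 : (α^2 + α : ℝ) ≠ 0 := by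
    intro h0
    rcases mul_eq_zero.mp (show α * (α + 1) = 0 by linarith [h0, sq α]) with h1 | h1
    · exact hα0 h1
    · exact hα1 (by linarith)
  set f := Matrix.GeneralLinearGroup.map (n := Fin 3) (Int.castRingHom ℝ) with hf
  set A' := f A with hA'def
  set B' := f B with hB'def
  have hA' : (A' : Matrix (Fin 3) (Fin 3) ℝ) = !![3, 2, 1; 2, 2, 1; 1, 1, 1] := by
    have h0 : (A' : Matrix (Fin 3) (Fin 3) ℝ)
        = (A : Matrix (Fin 3) (Fin 3) ℤ).map (Int.cast : ℤ → ℝ) := rfl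
    rw [h0, hA]; funext i j; fin_cases i <;> fin_cases j <;> norm_num [Matrix.map_apply]
  have hB' : (B' : Matrix (Fin 3) (Fin 3) ℝ) = !![2, 1, 1; 1, 2, 0; 1, 0, 1] := by
    have h0 : (B' : Matrix (Fin 3) (Fin 3) ℝ)
        = (B : Matrix (Fin 3) (Fin 3) ℤ).map (Int.cast : ℤ → ℝ) := rfl
    rw [h0, hB]; funext i j; fin_cases i <;> fin_cases j <;> norm_num [Matrix.map_apply]
  have hm : A' ^ l * B' ^ k = 1 := by
    rw [hA'def, hB'def, ← map_zpow, ← map_zpow, ← _root_.map_mul, h, _root_.map_one]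
  set v : Fin 3 → ℝ := ![α^2-1, α, 1] with hv
  have hAv : (A' : Matrix (Fin 3) (Fin 3) ℝ) *ᵥ v = (α^2+α) • v := by
    rw [hA']; exact eigA10 α hα
  have hBv : (B' : Matrix (Fin 3) (Fin 3) ℝ) *ᵥ v = (α^2) • v := by
    rw [hB']; exact eigB10 α hα
  have e := congrArg (fun u : GL (Fin 3) ℝ => (u : Matrix (Fin 3) (Fin 3) ℝ) *ᵥ v) hm
  simp only [Units.val_mul, Units.val_one, Matrix.one_mulVec, ← Matrix.mulVec_mulVec] at e
  rw [eigzpow10 B' _ hμ0 v hBv k, Matrix.mulVec_smul, eigzpow10 A' _ hlam0 v hAv l] at e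
  have e2 := congrFun e 2
  simp only [Pi.smul_apply, smul_eq_mul, hv] at e2
  norm_num at e2
  -- e2 : (α^2)^k * (α^2+α)^l = 1  (acting on third coordinate which is 1)
  have hscal : (α^2)^k * ((α^2+α)^l) = 1 := by
    simpa using e2
  have hlog := congrArg Real.log hscal
  rw [Real.log_mul (zpow_ne_zero _ hμ0) (zpow_ne_zero _ hlam0), Real.log_zpow, Real.log_zpow,
    Real.log_one] at hlog
  linarith [hlog]

/-- Viewing `A = [[3,2,1],[2,2,1],[1,1,1]]` and
`B = [[2,1,1],[1,2,0],[1,0,1]]` as elements of `GL(3, ℤ)`, one has `A^l * B^k = 1` only for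
`l = k = 0`; equivalently, `(l, k) ↦ A^l * B^k` is injective on `ℤ²`, so `A` and `B`
generate a group isomorphic to `ℤ²`. -/
theorem stmt_10
    (A B : GL (Fin 3) ℤ)
    (hA : (A : Matrix (Fin 3) (Fin 3) ℤ) = !![3, 2, 1; 2, 2, 1; 1, 1, 1])
    (hB : (B : Matrix (Fin 3) (Fin 3) ℤ) = !![2, 1, 1; 1, 2, 0; 1, 0, 1]) :
    (∀ l k : ℤ, A ^ l * B ^ k = 1 → l = 0 ∧ k = 0) ∧
    Function.Injective (fun p : ℤ × ℤ => A ^ p.1 * B ^ p.2) := by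
  have main : ∀ l k : ℤ, A ^ l * B ^ k = 1 → l = 0 ∧ k = 0 := by
    intro l k h
    -- root in (1.8, 1.9)
    obtain ⟨a, ha, ha0⟩ : ∃ a : ℝ, a ∈ Set.Ioo (1.8:ℝ) 1.9 ∧ a^3 - a^2 - 2*a + 1 = 0 := by
      have hc : ContinuousOn (fun x : ℝ => x^3 - x^2 - 2*x + 1) (Set.Icc 1.8 1.9) := by
        fun_prop
      have h0 : (0:ℝ) ∈ Set.Ioo ((fun x : ℝ => x^3 - x^2 - 2*x + 1) 1.8)
          ((fun x : ℝ => x^3 - x^2 - 2*x + 1) 1.9) := by norm_num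
      obtain ⟨a, ha, ha0⟩ := intermediate_value_Ioo (by norm_num : (1.8:ℝ) ≤ 1.9) hc h0
      exact ⟨a, ha, ha0⟩
    -- root in (-1.3, -1.2)
    obtain ⟨b, hb, hb0⟩ : ∃ b : ℝ, b ∈ Set.Ioo (-1.3:ℝ) (-1.2) ∧ b^3 - b^2 - 2*b + 1 = 0 := by
      have hc : ContinuousOn (fun x : ℝ => x^3 - x^2 - 2*x + 1) (Set.Icc (-1.3) (-1.2)) := by
        fun_prop
      have h0 : (0:ℝ) ∈ Set.Ioo ((fun x : ℝ => x^3 - x^2 - 2*x + 1) (-1.3))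
          ((fun x : ℝ => x^3 - x^2 - 2*x + 1) (-1.2)) := by norm_num
      obtain ⟨b, hb, hb0⟩ := intermediate_value_Ioo (by norm_num : (-1.3:ℝ) ≤ -1.2) hc h0
      exact ⟨b, hb, hb0⟩
    obtain ⟨ha1, ha2⟩ := ha
    obtain ⟨hb1, hb2⟩ := hb
    have eqa := logrel10 A B hA hB l k h a (by linarith [ha0])
    have eqb := logrel10 A B hA hB l k h b (by linarith [hb0])
    -- sign facts for the logs
    have hla : Real.log (a^2) > 0 := Real.log_pos (by nlinarith)
    have hlb : Real.log (a^2 + a) > 0 := Real.log_pos (by nlinarith)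
    have hlc : Real.log (b^2) > 0 := Real.log_pos (by nlinarith)
    have hld : Real.log (b^2 + b) < 0 := Real.log_neg (by nlinarith) (by nlinarith)
    set p := Real.log (a^2)
    set q := Real.log (a^2 + a)
    set r := Real.log (b^2)
    set s := Real.log (b^2 + b)
    -- eqa : k*p + l*q = 0, eqb : k*r + l*s = 0, p,q,r > 0, s < 0
    have hl : (l:ℝ) * (q * r - p * s) = 0 := by linear_combination r * eqa - p * eqb
    have hdet : q * r - p * s > 0 := by nlinarith
    have hl0 : (l:ℝ) = 0 := by
      rcases mul_eq_zero.mp hl with h' | h'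
      · exact h'
      · exact absurd h' (ne_of_gt hdet)
    have hlz : l = 0 := by exact_mod_cast hl0
    have hk0 : k = 0 := by
      rw [hl0] at eqa
      simp only [zero_mul, add_zero, mul_eq_zero] at eqa
      rcases eqa with h' | h'
      · exact_mod_cast h'
      · exact absurd h' (ne_of_gt hla)
    exact ⟨hlz, hk0⟩
  refine ⟨main, ?_⟩
  intro p q hpq
  simp only at hpq
  have hc : Commute A B := by
    show A * B = B * A
    ext
    rw [Units.val_mul, Units.val_mul, hA, hB]
    norm_num [Matrix.mul_fin_three]
  have hc2 : A ^ (-q.1) * B ^ p.2 = B ^ p.2 * A ^ (-q.1) := (hc.zpow_zpow (-q.1) p.2).eq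
  have key : A ^ (p.1 - q.1) * B ^ (p.2 - q.2) = 1 := by
    calc A ^ (p.1 - q.1) * B ^ (p.2 - q.2)
        = A ^ p.1 * (A ^ (-q.1) * B ^ p.2) * B ^ (-q.2) := by
          rw [sub_eq_add_neg, sub_eq_add_neg, _root_.zpow_add, _root_.zpow_add]; group
      _ = A ^ p.1 * (B ^ p.2 * A ^ (-q.1)) * B ^ (-q.2) := by rw [hc2]
      _ = A ^ p.1 * B ^ p.2 * (A ^ (-q.1) * B ^ (-q.2)) := by rw [mul_assoc, mul_assoc, mul_assoc]
      _ = A ^ p.1 * B ^ p.2 * (B ^ (-q.2) * A ^ (-q.1)) := by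
          rw [(hc.zpow_zpow (-q.1) (-q.2)).eq]
      _ = (A ^ p.1 * B ^ p.2) * (A ^ q.1 * B ^ q.2)⁻¹ := by
          rw [_root_.mul_inv_rev, _root_.zpow_neg, _root_.zpow_neg]
      _ = 1 := by rw [hpq, mul_inv_cancel]
  obtain ⟨h1, h2⟩ := main _ _ key
  have : p.1 = q.1 := by omega
  have : p.2 = q.2 := by omega
  exact Prod.ext (by omega) (by omega)
end
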